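/- Let d ≥ 1 and let v ∈ ℂ^d satisfy |⟨f_j, v⟩|² = 1/d for all j = 0,…,d−1. Then the cyclic shifts of v are orthonormal: ⟨v^(k), v^(k')⟩ = δ_{kk'} for all k, k' ∈ {0,…,d−1}. -/

import Mathlib

open scoped ComplexInnerProductSpace

/-- `ω d = exp(2πi/d)`, a primitive `d`-th root of unity. -/
noncomputable def omegaRoot (d : ℕ) : ℂ := Complex.exp (2 * Real.pi * Complex.I / d)

/-- The `j`-th Fourier basis vector of `ℂ^d`, with components `ω_d^{jm}/√d`. -/
noncomputable def fourierVec (d : ℕ) (j : Fin d) : EuclideanSpace ℂ (Fin d) :=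
  WithLp.toLp 2 (fun m => omegaRoot d ^ ((j : ℕ) * (m : ℕ)) / (Real.sqrt d : ℂ))

/-- The cyclic shift `v^(k)` of `v`, with components `(v^(k))_{(m+k) mod d} = v_m`,
i.e. `(v^(k))_n = v_{(n-k) mod d}`. -/
def cyclicShift {d : ℕ} (k : Fin d) (v : EuclideanSpace ℂ (Fin d)) :
    EuclideanSpace ℂ (Fin d) :=
  WithLp.toLp 2 (fun n => v (n - k))

theorem stmt_1 (d : ℕ) (hd : 1 ≤ d) (v : EuclideanSpace ℂ (Fin d))
    (hub : ∀ j : Fin d, ‖⟪fourierVec d j, v⟫‖ ^ 2 = 1 / d) :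
    ∀ k k' : Fin d,
      ⟪cyclicShift k v, cyclicShift k' v⟫ = if k = k' then (1 : ℂ) else 0 := by
  haveI : NeZero d := ⟨by omega⟩
  intro k k'
  set ω := omegaRoot d with hωdef
  have hdR : (0:ℝ) < d := by exact_mod_cast (by omega : 0 < d)
  have hdC : (d : ℂ) ≠ 0 := Nat.cast_ne_zero.mpr (by omega)
  have hprim : IsPrimitiveRoot ω d := Complex.isPrimitiveRoot_exp d (by omega)
  have hω0 : ω ≠ 0 := Complex.exp_ne_zero _
  -- |ω| = 1 and conjugation acts as inversion on powers of ω
  have habs : ‖ω‖ = 1 := by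
    have hz : (2 * (Real.pi:ℂ) * Complex.I / d) = ((2 * Real.pi / d : ℝ) : ℂ) * Complex.I := by
      push_cast; ring
    rw [hωdef, omegaRoot, hz, Complex.norm_exp_ofReal_mul_I]
  have hconj : ∀ a : ℤ, (starRingEnd ℂ) (ω ^ a) = ω ^ (-a) := by
    intro a
    rw [map_zpow₀, ← Complex.inv_eq_conj habs, inv_zpow, zpow_neg]
  -- the geometric sum over d-th roots of unity
  have hsum : ∀ a : ℤ, (∑ j : Fin d, ω ^ ((j : ℤ) * a)) = if (d:ℤ) ∣ a then (d:ℂ) else 0 := by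
    intro a
    have h1 : ∀ j : Fin d, ω ^ ((j:ℤ) * a) = (ω ^ a) ^ (j : ℕ) := by
      intro j
      rw [mul_comm, zpow_mul, zpow_natCast]
    rw [Finset.sum_congr rfl fun j _ => h1 j]
    by_cases hdvd : (d:ℤ) ∣ a
    · have hone : ω ^ a = 1 := (hprim.zpow_eq_one_iff_dvd a).mpr hdvd
      simp [hone, hdvd]
    · have hx1 : ω ^ a ≠ 1 := fun h => hdvd ((hprim.zpow_eq_one_iff_dvd a).mp h)
      have hxd : (ω ^ a) ^ d = 1 := by
        rw [← zpow_natCast, ← zpow_mul, mul_comm, zpow_mul, zpow_natCast, hprim.pow_eq_one,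
          one_zpow]
      rw [Fin.sum_univ_eq_sum_range (fun j => (ω ^ a) ^ j) d, geom_sum_eq hx1, hxd]
      simp [hdvd]
  -- notation for √d as a complex number
  set s : ℂ := ((Real.sqrt d : ℝ) : ℂ) with hsdef
  have hss : s * s = (d : ℂ) := by
    rw [hsdef, ← Complex.ofReal_mul, Real.mul_self_sqrt hdR.le]
    norm_num
  have hs0 : s ≠ 0 := by
    intro h
    rw [h, zero_mul] at hss
    exact hdC hss.symm
  have hconjs : (starRingEnd ℂ) s = s := Complex.conj_ofReal _
  -- the Fourier coefficients
  set F : Fin d → ℂ := fun j => ⟪fourierVec d j, v⟫ with hFdef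
  have hF : ∀ j : Fin d, (starRingEnd ℂ) (F j) * F j = 1 / (d : ℂ) := by
    intro j
    have h1 : (Complex.normSq (F j) : ℂ) = ((1 / d : ℝ) : ℂ) := by
      rw [← Complex.sq_norm, hub j]
    rw [← Complex.normSq_eq_conj_mul_self, h1]
    push_cast
    ring
  have hFexp : ∀ j : Fin d, F j = (∑ m : Fin d, ω ^ (-((j:ℤ) * (m:ℤ))) * v m) / s := by
    intro j
    rw [hFdef]
    simp only [PiLp.inner_apply, RCLike.inner_apply]
    rw [Finset.sum_div]
    refine Finset.sum_congr rfl fun m _ => ?_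
    have hfv : (fourierVec d j) m = ω ^ ((j:ℤ) * (m:ℤ)) / s := by
      show omegaRoot d ^ ((j:ℕ) * (m:ℕ)) / ((Real.sqrt d : ℝ) : ℂ) = ω ^ ((j:ℤ) * (m:ℤ)) / s
      rw [← hωdef, ← hsdef, ← zpow_natCast]
      congr 2
    rw [hfv, map_div₀, hconj, hconjs]
    ring
  have hFconj : ∀ j : Fin d,
      (starRingEnd ℂ) (F j) = (∑ m : Fin d, ω ^ ((j:ℤ) * (m:ℤ)) * (starRingEnd ℂ) (v m)) / s := by
    intro j
    rw [hFexp j, map_div₀, hconjs, map_sum]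
    congr 1
    refine Finset.sum_congr rfl fun m _ => ?_
    rw [map_mul, hconj, neg_neg]
  -- the shifted inner product as a correlation sum
  set t : Fin d := k - k' with htdef
  have hL : ⟪cyclicShift k v, cyclicShift k' v⟫
      = ∑ m : Fin d, (starRingEnd ℂ) (v m) * v (m + t) := by
    simp only [PiLp.inner_apply, RCLike.inner_apply']
    rw [← Equiv.sum_comp (Equiv.addRight k) (fun n => (starRingEnd ℂ) ((cyclicShift k v) n) * (cyclicShift k' v) n)]
    refine Finset.sum_congr rfl fun m _ => ?_
    have h1 : (m + k) - k = m := by abel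
    have h2 : (m + k) - k' = m + t := by rw [htdef]; abel
    simp only [Equiv.coe_addRight, cyclicShift]
    rw [h1, h2]
  -- key identity: the weighted sum of |F j|^2 equals the correlation
  have hkey : (∑ j : Fin d, ω ^ ((j:ℤ) * (t:ℤ)) * ((starRingEnd ℂ) (F j) * F j))
      = ∑ m : Fin d, (starRingEnd ℂ) (v m) * v (m + t) := by
    have hterm : ∀ j : Fin d, ω ^ ((j:ℤ) * (t:ℤ)) * ((starRingEnd ℂ) (F j) * F j)
        = ∑ m : Fin d, ∑ m' : Fin d,
            (starRingEnd ℂ) (v m) * v m' * ω ^ ((j:ℤ) * ((t:ℤ) + (m:ℤ) - (m':ℤ))) / (d:ℂ) := by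
      intro j
      rw [hFconj j, hFexp j, div_mul_div_comm, hss, Finset.sum_mul_sum, ← mul_div_assoc]
      simp only [← Finset.sum_div]
      congr 1
      rw [Finset.mul_sum]
      refine Finset.sum_congr rfl fun m _ => ?_
      rw [Finset.mul_sum]
      refine Finset.sum_congr rfl fun m' _ => ?_
      have hz : ω ^ ((j:ℤ) * ((t:ℤ) + (m:ℤ) - (m':ℤ)))
          = ω ^ ((j:ℤ) * (t:ℤ)) * (ω ^ ((j:ℤ) * (m:ℤ)) * ω ^ (-((j:ℤ) * (m':ℤ)))) := by
        rw [← zpow_add₀ hω0, ← zpow_add₀ hω0]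
        ring_nf
      rw [hz]
      ring
    rw [Finset.sum_congr rfl fun j _ => hterm j]
    rw [Finset.sum_comm]
    refine Finset.sum_congr rfl fun m _ => ?_
    rw [Finset.sum_comm]
    have hcollapse : ∀ m' : Fin d,
        (∑ j : Fin d, (starRingEnd ℂ) (v m) * v m' * ω ^ ((j:ℤ) * ((t:ℤ) + (m:ℤ) - (m':ℤ))) / (d:ℂ))
        = if m' = m + t then (starRingEnd ℂ) (v m) * v m' else 0 := by
      intro m'
      rw [← Finset.sum_div, ← Finset.mul_sum, hsum ((t:ℤ) + (m:ℤ) - (m':ℤ))]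
      have hiff : ((d:ℤ) ∣ ((t:ℤ) + (m:ℤ) - (m':ℤ))) ↔ m' = m + t := by
        have hm' : (m' : ℕ) < d := m'.isLt
        have hm : (m : ℕ) < d := m.isLt
        have ht : (t : ℕ) < d := t.isLt
        constructor
        · rintro ⟨q, hq⟩
          have hq01 : q = 0 ∨ q = 1 := by
            by_contra hcon
            have hq' : q ≤ -1 ∨ 2 ≤ q := by omega
            have hd0 : (0:ℤ) ≤ (d:ℤ) := by positivity
            rcases hq' with h | h
            · have h2 : (d:ℤ) * q ≤ (d:ℤ) * (-1) := mul_le_mul_of_nonneg_left h hd0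
              omega
            · have h2 : (d:ℤ) * 2 ≤ (d:ℤ) * q := mul_le_mul_of_nonneg_left h hd0
              omega
          have hval : ((m : ℕ) + (t : ℕ)) % d = (m' : ℕ) := by
            rcases hq01 with rfl | rfl
            · rw [mul_zero] at hq
              rw [show (m : ℕ) + (t : ℕ) = (m' : ℕ) by omega]
              exact Nat.mod_eq_of_lt hm'
            · rw [mul_one] at hq
              rw [show (m : ℕ) + (t : ℕ) = d + (m' : ℕ) by omega, Nat.add_mod_left]
              exact Nat.mod_eq_of_lt hm'
          exact Fin.ext (by rw [Fin.add_def]; exact hval.symm)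
        · intro hmt
          have hval : ((m' : Fin d) : ℕ) = ((m : ℕ) + (t : ℕ)) % d := by
            rw [hmt, Fin.add_def]
          have hdm := Nat.div_add_mod ((m : ℕ) + (t : ℕ)) d
          refine ⟨(((m : ℕ) + (t : ℕ)) / d : ℕ), ?_⟩
          have hdm' : (d : ℤ) * ((((m : ℕ) + (t : ℕ)) / d : ℕ) : ℤ)
              + ((((m : ℕ) + (t : ℕ)) % d : ℕ) : ℤ) = ((m : ℕ) : ℤ) + ((t : ℕ) : ℤ) := by
            exact_mod_cast congrArg (Nat.cast : ℕ → ℤ) hdm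
          have hval' : ((m' : ℕ) : ℤ) = ((((m : ℕ) + (t : ℕ)) % d : ℕ) : ℤ) := by
            exact_mod_cast congrArg (Nat.cast : ℕ → ℤ) hval
          linarith
      by_cases hcase : m' = m + t
      · rw [if_pos (hiff.mpr hcase), if_pos hcase]
        field_simp
      · rw [if_neg (fun h => hcase (hiff.mp h)), if_neg hcase]
        simp
    rw [Finset.sum_congr rfl fun m' _ => hcollapse m', Finset.sum_ite_eq' Finset.univ (m + t)]
    simp
  -- evaluate the weighted sum using the hypothesis
  have hLHS : (∑ j : Fin d, ω ^ ((j:ℤ) * (t:ℤ)) * ((starRingEnd ℂ) (F j) * F j))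
      = if t = 0 then (1:ℂ) else 0 := by
    rw [Finset.sum_congr rfl fun j _ => by rw [hF j]]
    rw [← Finset.sum_mul, hsum (t:ℤ)]
    have hdvd_iff : ((d:ℤ) ∣ ((t:ℤ) : ℤ)) ↔ t = 0 := by
      constructor
      · intro hdv
        have hdv' : d ∣ (t : ℕ) := Int.natCast_dvd_natCast.mp hdv
        have : (t : ℕ) = 0 := Nat.eq_zero_of_dvd_of_lt hdv' t.isLt
        exact Fin.ext (by simpa using this)
      · intro h
        simp [h]
    by_cases hcase : t = 0
    · rw [if_pos (hdvd_iff.mpr hcase), if_pos hcase]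
      field_simp
    · rw [if_neg (fun h => hcase (hdvd_iff.mp h)), if_neg hcase]
      simp
  have heq : k = k' ↔ t = 0 := by
    rw [htdef, sub_eq_zero]
  rw [hL, ← hkey, hLHS]
  by_cases hcase : k = k'
  · rw [if_pos hcase, if_pos (heq.mp hcase)]
  · rw [if_neg hcase, if_neg (fun h => hcase (heq.mpr h))]
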